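/- Let A, B : [0,1] → ℝ be continuous. If either A is not identically zero and does not change sign on [0,1], or B is not identically zero and does not change sign on [0,1], then the Abel equation x' = A(t)x³ + B(t)x² has at most one periodic orbit with nonzero initial condition, and every periodic orbit γ with γ(0) ≠ 0 is hyperbolic. -/

import Mathlib

/-- `γ : ℝ → ℝ` is a solution of the Abel equation `x' = A(t)x³ + B(t)x²` on `[0,1]`. -/
def IsAbelSolution (A B : ℝ → ℝ) (γ : ℝ → ℝ) : Prop :=
  ∀ t ∈ Set.Icc (0:ℝ) 1,
    HasDerivWithinAt γ (A t * γ t ^ 3 + B t * γ t ^ 2) (Set.Icc (0:ℝ) 1) t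

/-- A periodic orbit of the Abel equation: a solution on `[0,1]` with `γ 0 = γ 1`. -/
def IsPeriodicOrbit (A B : ℝ → ℝ) (γ : ℝ → ℝ) : Prop :=
  IsAbelSolution A B γ ∧ γ 0 = γ 1

/-- A periodic orbit is hyperbolic iff `∫₀¹ (3A(t)γ(t)² + 2B(t)γ(t)) dt ≠ 0`. -/
def IsHyperbolic (A B : ℝ → ℝ) (γ : ℝ → ℝ) : Prop :=
  (∫ t in (0:ℝ)..1, (3 * A t * γ t ^ 2 + 2 * B t * γ t)) ≠ 0

/-- `F` is not identically zero and does not change sign on `[0,1]`. -/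
def GoodSign (F : ℝ → ℝ) : Prop :=
  (¬ ∀ t ∈ Set.Icc (0:ℝ) 1, F t = 0) ∧
  ((∀ t ∈ Set.Icc (0:ℝ) 1, 0 ≤ F t) ∨ (∀ t ∈ Set.Icc (0:ℝ) 1, F t ≤ 0))

open Set intervalIntegral MeasureTheory

lemma IsAbelSolution.continuousOn {A B γ : ℝ → ℝ} (h : IsAbelSolution A B γ) :
    ContinuousOn γ (Set.Icc 0 1) := fun t ht => (h t ht).continuousWithinAt

lemma abel_forward_eq {A B γ₁ γ₂ : ℝ → ℝ}
    (hA : ContinuousOn A (Set.Icc 0 1)) (hB : ContinuousOn B (Set.Icc 0 1))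
    (h1 : IsAbelSolution A B γ₁) (h2 : IsAbelSolution A B γ₂)
    {s : ℝ} (hs : s ∈ Set.Icc (0:ℝ) 1) (heq : γ₁ s = γ₂ s) :
    ∀ t ∈ Set.Icc s 1, γ₁ t = γ₂ t := by
  have hc1 := h1.continuousOn
  have hc2 := h2.continuousOn
  set φ : ℝ → ℝ := fun t => A t * (γ₁ t ^ 2 + γ₁ t * γ₂ t + γ₂ t ^ 2) + B t * (γ₁ t + γ₂ t)
    with hφ
  have hφc : ContinuousOn φ (Set.Icc 0 1) := by
    apply ContinuousOn.add
    · exact hA.mul (((hc1.pow 2).add (hc1.mul hc2)).add (hc2.pow 2))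
    · exact hB.mul (hc1.add hc2)
  obtain ⟨C, hC⟩ := isCompact_Icc.exists_bound_of_continuousOn hφc
  set K : ℝ := max C 0 with hK
  set f : ℝ → ℝ := fun t => γ₁ t - γ₂ t with hf
  set f' : ℝ → ℝ := fun t => φ t * f t with hf'
  have hsub : Set.Icc s 1 ⊆ Set.Icc (0:ℝ) 1 := Set.Icc_subset_Icc hs.1 le_rfl
  have key : ∀ x ∈ Set.Icc s 1, ‖f x‖ ≤ gronwallBound 0 K 0 (x - s) := by
    apply norm_le_gronwallBound_of_norm_deriv_right_le (f' := f')
    · exact (hc1.sub hc2).mono hsub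
    · intro x hx
      have hx01 : x ∈ Set.Icc (0:ℝ) 1 := hsub ⟨hx.1, hx.2.le⟩
      have hd := (h1 x hx01).sub (h2 x hx01)
      have hval : f' x = (A x * γ₁ x ^ 3 + B x * γ₁ x ^ 2) -
          (A x * γ₂ x ^ 3 + B x * γ₂ x ^ 2) := by
        simp only [hf', hφ, hf]; ring
      rw [hval]
      have hd2 : HasDerivWithinAt f ((A x * γ₁ x ^ 3 + B x * γ₁ x ^ 2) -
          (A x * γ₂ x ^ 3 + B x * γ₂ x ^ 2)) (Set.Icc x 1) x :=
        hd.mono (Set.Icc_subset_Icc hx01.1 le_rfl)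
      exact hd2.mono_of_mem_nhdsWithin (Icc_mem_nhdsGE_of_mem ⟨le_rfl, hx.2⟩)
    · simp [hf, heq]
    · intro x hx
      have hx01 : x ∈ Set.Icc (0:ℝ) 1 := hsub ⟨hx.1, hx.2.le⟩
      calc ‖f' x‖ = ‖φ x‖ * ‖f x‖ := by simp [hf', norm_mul]
        _ ≤ K * ‖f x‖ := mul_le_mul_of_nonneg_right
              ((hC x hx01).trans (le_max_left _ _)) (norm_nonneg _)
        _ ≤ K * ‖f x‖ + 0 := by simp
  intro t ht
  have := key t ht
  rw [gronwallBound_ε0_δ0] at this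
  have h0 : ‖f t‖ = 0 := le_antisymm this (norm_nonneg _)
  have : f t = 0 := by simpa using h0
  simpa [hf, sub_eq_zero] using this

lemma periodic_eqOn {A B γ₁ γ₂ : ℝ → ℝ}
    (hA : ContinuousOn A (Set.Icc 0 1)) (hB : ContinuousOn B (Set.Icc 0 1))
    (h1 : IsPeriodicOrbit A B γ₁) (h2 : IsPeriodicOrbit A B γ₂)
    {s : ℝ} (hs : s ∈ Set.Icc (0:ℝ) 1) (heq : γ₁ s = γ₂ s) :
    Set.EqOn γ₁ γ₂ (Set.Icc 0 1) := by
  have h11 : γ₁ 1 = γ₂ 1 :=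
    abel_forward_eq hA hB h1.1 h2.1 hs heq 1 ⟨hs.2, le_rfl⟩
  have h00 : γ₁ 0 = γ₂ 0 := by rw [h1.2, h2.2]; exact h11
  intro t ht
  exact abel_forward_eq hA hB h1.1 h2.1 (Set.left_mem_Icc.2 zero_le_one) h00 t ht

lemma zero_solution (A B : ℝ → ℝ) : IsPeriodicOrbit A B (fun _ => 0) :=
  ⟨fun t _ => by simpa using (hasDerivWithinAt_const t _ (0:ℝ)), rfl⟩

lemma periodic_ne_zero {A B γ : ℝ → ℝ}
    (hA : ContinuousOn A (Set.Icc 0 1)) (hB : ContinuousOn B (Set.Icc 0 1))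
    (h : IsPeriodicOrbit A B γ) (h0 : γ 0 ≠ 0) :
    ∀ t ∈ Set.Icc (0:ℝ) 1, γ t ≠ 0 := by
  intro t ht hz
  exact h0 (periodic_eqOn hA hB h (zero_solution A B) ht hz (Set.left_mem_Icc.2 zero_le_one))

lemma contOn_intInt {f : ℝ → ℝ} (hf : ContinuousOn f (Set.Icc 0 1)) :
    IntervalIntegrable f MeasureTheory.volume 0 1 :=
  ContinuousOn.intervalIntegrable (by rwa [Set.uIcc_of_le zero_le_one])

lemma abel_ftc {g g' : ℝ → ℝ}
    (hcont : ContinuousOn g (Set.Icc 0 1))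
    (hderiv : ∀ x ∈ Set.Ioo (0:ℝ) 1, HasDerivWithinAt g (g' x) (Set.Ioi x) x)
    (hint : ContinuousOn g' (Set.Icc 0 1)) (hper : g 0 = g 1) :
    (∫ t in (0:ℝ)..1, g' t) = 0 := by
  rw [intervalIntegral.integral_eq_sub_of_hasDeriv_right_of_le zero_le_one hcont hderiv
    (contOn_intInt hint), hper, sub_self]

/-- derivative of γ within `Ioi x` at interior points. -/
lemma sol_deriv_Ioi {A B γ : ℝ → ℝ} (h : IsAbelSolution A B γ)
    {x : ℝ} (hx : x ∈ Set.Ioo (0:ℝ) 1) :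
    HasDerivWithinAt γ (A x * γ x ^ 3 + B x * γ x ^ 2) (Set.Ioi x) x :=
  (h x (Set.Ioo_subset_Icc_self hx)).mono_of_mem_nhdsWithin
    (Icc_mem_nhdsGT_of_mem ⟨hx.1.le, hx.2⟩)

lemma periodic_int2 {A B γ : ℝ → ℝ}
    (h : IsPeriodicOrbit A B γ) (hne : ∀ t ∈ Set.Icc (0:ℝ) 1, γ t ≠ 0)
    (hA : ContinuousOn A (Set.Icc 0 1)) (hB : ContinuousOn B (Set.Icc 0 1)) :
    (∫ t in (0:ℝ)..1, (A t * γ t ^ 2 + B t * γ t)) = 0 := by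
  have hcγ := h.1.continuousOn
  apply abel_ftc (g := fun t => Real.log (γ t)) (g' := fun t => A t * γ t ^ 2 + B t * γ t)
  · exact hcγ.log hne
  · intro x hx
    have hd := sol_deriv_Ioi h.1 hx
    have hγx := hne x (Set.Ioo_subset_Icc_self hx)
    have := (Real.hasDerivAt_log hγx).comp_hasDerivWithinAt x hd
    refine this.congr_deriv ?_
    field_simp
  · exact (hA.mul (hcγ.pow 2)).add (hB.mul hcγ)
  · simp [h.2]

lemma periodic_int1 {A B γ : ℝ → ℝ}
    (h : IsPeriodicOrbit A B γ) (hne : ∀ t ∈ Set.Icc (0:ℝ) 1, γ t ≠ 0)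
    (hA : ContinuousOn A (Set.Icc 0 1)) (hB : ContinuousOn B (Set.Icc 0 1)) :
    (∫ t in (0:ℝ)..1, (A t * γ t + B t)) = 0 := by
  have hcγ := h.1.continuousOn
  apply abel_ftc (g := fun t => -(γ t)⁻¹) (g' := fun t => A t * γ t + B t)
  · exact (hcγ.inv₀ hne).neg
  · intro x hx
    have hd := sol_deriv_Ioi h.1 hx
    have hγx := hne x (Set.Ioo_subset_Icc_self hx)
    have := (hd.inv hγx).neg
    refine this.congr_deriv ?_
    field_simp
  · exact (hA.mul hcγ).add hB
  · simp [h.2]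

lemma periodic_int3 {A B γ : ℝ → ℝ}
    (h : IsPeriodicOrbit A B γ) (hne : ∀ t ∈ Set.Icc (0:ℝ) 1, γ t ≠ 0)
    (hA : ContinuousOn A (Set.Icc 0 1)) (hB : ContinuousOn B (Set.Icc 0 1)) :
    (∫ t in (0:ℝ)..1, (A t + B t * (γ t)⁻¹)) = 0 := by
  have hcγ := h.1.continuousOn
  apply abel_ftc (g := fun t => -(γ t ^ 2)⁻¹ / 2) (g' := fun t => A t + B t * (γ t)⁻¹)
  · exact (((hcγ.pow 2).inv₀ (fun t ht => pow_ne_zero 2 (hne t ht))).neg).div_const 2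
  · intro x hx
    have hd := sol_deriv_Ioi h.1 hx
    have hγx := hne x (Set.Ioo_subset_Icc_self hx)
    have := (((hd.pow 2).inv (pow_ne_zero 2 hγx)).neg).div_const 2
    refine this.congr_deriv ?_
    field_simp
    simp only [Pi.pow_apply]
    ring
  · exact hA.add (hB.mul (hcγ.inv₀ hne))
  · simp [h.2]

lemma integral_ne_zero_of_nonneg {f : ℝ → ℝ} (hf : ContinuousOn f (Set.Icc 0 1))
    (h0 : ∀ t ∈ Set.Icc (0:ℝ) 1, 0 ≤ f t) {t₀ : ℝ} (ht₀ : t₀ ∈ Set.Icc (0:ℝ) 1)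
    (hpos : 0 < f t₀) : (∫ t in (0:ℝ)..1, f t) ≠ 0 := by
  intro hz
  rw [intervalIntegral.integral_eq_zero_iff_of_le_of_nonneg_ae zero_le_one
    ((MeasureTheory.ae_restrict_iff' measurableSet_Ioc).2 (Filter.Eventually.of_forall
      fun x hx => h0 x (Set.Ioc_subset_Icc_self hx)))
    (contOn_intInt hf)] at hz
  -- find an interior point with positive value
  have hcl : t₀ ∈ closure (Set.Ioo (0:ℝ) 1) := by
    rwa [closure_Ioo (zero_ne_one)]
  have hnb : (nhdsWithin t₀ (Set.Ioo (0:ℝ) 1)).NeBot :=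
    mem_closure_iff_nhdsWithin_neBot.1 hcl
  have hct : ContinuousWithinAt f (Set.Ioo 0 1) t₀ :=
    (hf t₀ ht₀).mono Set.Ioo_subset_Icc_self
  have hev : ∀ᶠ x in nhdsWithin t₀ (Set.Ioo (0:ℝ) 1), 0 < f x :=
    hct.eventually (isOpen_Ioi.eventually_mem hpos)
  obtain ⟨t₁, hft₁, ht₁⟩ := (hev.and self_mem_nhdsWithin).exists
  -- find an interval around t₁ where f is positive
  have hcA : ContinuousAt f t₁ :=
    (hf t₁ (Set.Ioo_subset_Icc_self ht₁)).continuousAt (Icc_mem_nhds ht₁.1 ht₁.2)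
  have hev2 : {x | 0 < f x ∧ x ∈ Set.Ioo (0:ℝ) 1} ∈ nhds t₁ :=
    (hcA.eventually (isOpen_Ioi.eventually_mem hft₁)).and (isOpen_Ioo.eventually_mem ht₁)
  obtain ⟨u, v, huv, hsub⟩ := mem_nhds_iff_exists_Ioo_subset.1 hev2
  have hzero : MeasureTheory.volume.restrict (Set.Ioc (0:ℝ) 1) (Set.Ioo u v) = 0 :=
    MeasureTheory.measure_mono_null (fun x hx => (hsub hx).1.ne')
      (MeasureTheory.ae_iff.1 hz)
  rw [MeasureTheory.Measure.restrict_apply measurableSet_Ioo,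
    Set.inter_eq_self_of_subset_left
      (fun x hx => Set.Ioo_subset_Ioc_self (hsub hx).2), Real.volume_Ioo] at hzero
  rw [ENNReal.ofReal_eq_zero] at hzero
  have h1 := huv.1
  have h2 := huv.2
  linarith

lemma sign_const {g : ℝ → ℝ} (hg : ContinuousOn g (Set.Icc 0 1))
    (hne : ∀ t ∈ Set.Icc (0:ℝ) 1, g t ≠ 0) :
    (∀ t ∈ Set.Icc (0:ℝ) 1, 0 < g t) ∨ (∀ t ∈ Set.Icc (0:ℝ) 1, g t < 0) := by
  by_contra hcon
  push_neg at hcon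
  obtain ⟨⟨s, hs, hgs⟩, ⟨t, ht, hgt⟩⟩ := hcon
  have hgs' : g s < 0 := lt_of_le_of_ne hgs (hne s hs)
  have hgt' : 0 < g t := lt_of_le_of_ne hgt (Ne.symm (hne t ht))
  have hsub : Set.uIcc s t ⊆ Set.Icc (0:ℝ) 1 := Set.ordConnected_Icc.uIcc_subset hs ht
  have := intermediate_value_uIcc (hg.mono hsub)
  have h0 : (0:ℝ) ∈ Set.uIcc (g s) (g t) := Set.mem_uIcc.2 (Or.inl ⟨hgs'.le, hgt'.le⟩)
  obtain ⟨x, hx, hgx⟩ := this h0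
  exact hne x (hsub hx) hgx

lemma integral_mul_ne_zero {f g : ℝ → ℝ}
    (hf : ContinuousOn f (Set.Icc 0 1)) (hg : ContinuousOn g (Set.Icc 0 1))
    (hfs : (∀ t ∈ Set.Icc (0:ℝ) 1, 0 ≤ f t) ∨ (∀ t ∈ Set.Icc (0:ℝ) 1, f t ≤ 0))
    {t₀ : ℝ} (ht₀ : t₀ ∈ Set.Icc (0:ℝ) 1) (hf0 : f t₀ ≠ 0)
    (hgne : ∀ t ∈ Set.Icc (0:ℝ) 1, g t ≠ 0) :
    (∫ t in (0:ℝ)..1, f t * g t) ≠ 0 := by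
  have hneg : (∫ t in (0:ℝ)..1, -(f t * g t)) = -(∫ t in (0:ℝ)..1, f t * g t) :=
    intervalIntegral.integral_neg
  have hprodc : ContinuousOn (fun t => f t * g t) (Set.Icc 0 1) := hf.mul hg
  rcases sign_const hg hgne with hgp | hgn <;> rcases hfs with hfp | hfn
  · exact integral_ne_zero_of_nonneg hprodc
      (fun t ht => mul_nonneg (hfp t ht) (hgp t ht).le) ht₀
      (mul_pos (lt_of_le_of_ne (hfp t₀ ht₀) (Ne.symm hf0)) (hgp t₀ ht₀))
  · intro hz
    refine integral_ne_zero_of_nonneg (hprodc.neg)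
      (fun t ht => ?_) ht₀ ?_ (by show (∫ t in (0:ℝ)..1, -(f t * g t)) = 0; rw [hneg, hz, neg_zero])
    · exact neg_nonneg.2 (mul_nonpos_of_nonpos_of_nonneg (hfn t ht) (hgp t ht).le)
    · have : f t₀ < 0 := lt_of_le_of_ne (hfn t₀ ht₀) hf0
      have := mul_pos (neg_pos.2 this) (hgp t₀ ht₀)
      simpa [neg_mul] using this
  · intro hz
    refine integral_ne_zero_of_nonneg (hprodc.neg)
      (fun t ht => ?_) ht₀ ?_ (by show (∫ t in (0:ℝ)..1, -(f t * g t)) = 0; rw [hneg, hz, neg_zero])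
    · exact neg_nonneg.2 (mul_nonpos_of_nonneg_of_nonpos (hfp t ht) (hgn t ht).le)
    · have : 0 < f t₀ := lt_of_le_of_ne (hfp t₀ ht₀) (Ne.symm hf0)
      have := mul_pos this (neg_pos.2 (hgn t₀ ht₀))
      simpa [mul_neg] using this
  · exact integral_ne_zero_of_nonneg hprodc
      (fun t ht => mul_nonneg (by linarith [hfn t ht] : (0:ℝ) ≤ -f t) (by linarith [hgn t ht] : (0:ℝ) ≤ -g t) |>.trans_eq (by ring)) ht₀
      (mul_pos_of_neg_of_neg (lt_of_le_of_ne (hfn t₀ ht₀) hf0) (hgn t₀ ht₀))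

theorem abel_uniqueness_A_or_B_signed
    (A B : ℝ → ℝ)
    (hA : ContinuousOn A (Set.Icc 0 1)) (hB : ContinuousOn B (Set.Icc 0 1))
    (h : GoodSign A ∨ GoodSign B) :
    (∀ γ₁ γ₂ : ℝ → ℝ, IsPeriodicOrbit A B γ₁ → IsPeriodicOrbit A B γ₂ →
      γ₁ 0 ≠ 0 → γ₂ 0 ≠ 0 → Set.EqOn γ₁ γ₂ (Set.Icc 0 1)) ∧
    (∀ γ : ℝ → ℝ, IsPeriodicOrbit A B γ → γ 0 ≠ 0 → IsHyperbolic A B γ) := by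
  constructor
  · -- uniqueness
    intro γ₁ γ₂ hp1 hp2 h1 h2
    by_contra hcon
    have hdiff : ∀ t ∈ Set.Icc (0:ℝ) 1, γ₁ t ≠ γ₂ t := by
      intro t ht hE
      exact hcon (periodic_eqOn hA hB hp1 hp2 ht hE)
    have hne1 := periodic_ne_zero hA hB hp1 h1
    have hne2 := periodic_ne_zero hA hB hp2 h2
    have hc1 := hp1.1.continuousOn
    have hc2 := hp2.1.continuousOn
    rcases h with hGA | hGB
    · -- A has good sign : ∫ A (γ₁ - γ₂) = 0 gives contradiction
      obtain ⟨hAnz, hAsgn⟩ := hGA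
      push_neg at hAnz
      obtain ⟨t₀, ht₀, hAt₀⟩ := hAnz
      have hI1 := periodic_int1 hp1 hne1 hA hB
      have hI2 := periodic_int1 hp2 hne2 hA hB
      have hint1 : IntervalIntegrable (fun t => A t * γ₁ t + B t) MeasureTheory.volume 0 1 :=
        contOn_intInt ((hA.mul hc1).add hB)
      have hint2 : IntervalIntegrable (fun t => A t * γ₂ t + B t) MeasureTheory.volume 0 1 :=
        contOn_intInt ((hA.mul hc2).add hB)
      have hz : (∫ t in (0:ℝ)..1, A t * (γ₁ t - γ₂ t)) = 0 := by
        have : (∫ t in (0:ℝ)..1, A t * (γ₁ t - γ₂ t)) =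
            (∫ t in (0:ℝ)..1, (A t * γ₁ t + B t)) -
            (∫ t in (0:ℝ)..1, (A t * γ₂ t + B t)) := by
          rw [← intervalIntegral.integral_sub hint1 hint2]
          apply intervalIntegral.integral_congr
          intro t _
          ring
        rw [this, hI1, hI2, sub_zero]
      exact integral_mul_ne_zero hA (hc1.sub hc2) hAsgn ht₀ hAt₀
        (fun t ht => sub_ne_zero_of_ne (hdiff t ht)) hz
    · -- B has good sign : ∫ B (γ₁⁻¹ - γ₂⁻¹) = 0 gives contradiction
      obtain ⟨hBnz, hBsgn⟩ := hGB
      push_neg at hBnz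
      obtain ⟨t₀, ht₀, hBt₀⟩ := hBnz
      have hI1 := periodic_int3 hp1 hne1 hA hB
      have hI2 := periodic_int3 hp2 hne2 hA hB
      have hint1 : IntervalIntegrable (fun t => A t + B t * (γ₁ t)⁻¹)
          MeasureTheory.volume 0 1 := contOn_intInt (hA.add (hB.mul (hc1.inv₀ hne1)))
      have hint2 : IntervalIntegrable (fun t => A t + B t * (γ₂ t)⁻¹)
          MeasureTheory.volume 0 1 := contOn_intInt (hA.add (hB.mul (hc2.inv₀ hne2)))
      have hz : (∫ t in (0:ℝ)..1, B t * ((γ₁ t)⁻¹ - (γ₂ t)⁻¹)) = 0 := by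
        have : (∫ t in (0:ℝ)..1, B t * ((γ₁ t)⁻¹ - (γ₂ t)⁻¹)) =
            (∫ t in (0:ℝ)..1, (A t + B t * (γ₁ t)⁻¹)) -
            (∫ t in (0:ℝ)..1, (A t + B t * (γ₂ t)⁻¹)) := by
          rw [← intervalIntegral.integral_sub hint1 hint2]
          apply intervalIntegral.integral_congr
          intro t _
          ring
        rw [this, hI1, hI2, sub_zero]
      refine integral_mul_ne_zero hB ((hc1.inv₀ hne1).sub (hc2.inv₀ hne2)) hBsgn ht₀ hBt₀
        (fun t ht => sub_ne_zero_of_ne fun hE => hdiff t ht (inv_injective hE)) hz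
  · -- hyperbolicity
    intro γ hp h0
    have hne := periodic_ne_zero hA hB hp h0
    have hcγ := hp.1.continuousOn
    have hI := periodic_int2 hp hne hA hB
    have hintI : IntervalIntegrable (fun t => A t * γ t ^ 2 + B t * γ t)
        MeasureTheory.volume 0 1 := contOn_intInt ((hA.mul (hcγ.pow 2)).add (hB.mul hcγ))
    unfold IsHyperbolic
    rcases h with hGA | hGB
    · obtain ⟨hAnz, hAsgn⟩ := hGA
      push_neg at hAnz
      obtain ⟨t₀, ht₀, hAt₀⟩ := hAnz
      have hintA : IntervalIntegrable (fun t => A t * γ t ^ 2) MeasureTheory.volume 0 1 :=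
        contOn_intInt (hA.mul (hcγ.pow 2))
      have hE : (∫ t in (0:ℝ)..1, (3 * A t * γ t ^ 2 + 2 * B t * γ t)) =
          (∫ t in (0:ℝ)..1, A t * γ t ^ 2) +
          2 * (∫ t in (0:ℝ)..1, (A t * γ t ^ 2 + B t * γ t)) := by
        rw [← intervalIntegral.integral_const_mul,
          ← intervalIntegral.integral_add hintA (hintI.const_mul 2)]
        apply intervalIntegral.integral_congr
        intro t _
        ring
      rw [hE, hI, mul_zero, add_zero]
      exact integral_mul_ne_zero hA (hcγ.pow 2) hAsgn ht₀ hAt₀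
        (fun t ht => pow_ne_zero 2 (hne t ht))
    · obtain ⟨hBnz, hBsgn⟩ := hGB
      push_neg at hBnz
      obtain ⟨t₀, ht₀, hBt₀⟩ := hBnz
      have hintB : IntervalIntegrable (fun t => B t * (-γ t)) MeasureTheory.volume 0 1 :=
        contOn_intInt (hB.mul hcγ.neg)
      have hE : (∫ t in (0:ℝ)..1, (3 * A t * γ t ^ 2 + 2 * B t * γ t)) =
          (∫ t in (0:ℝ)..1, B t * (-γ t)) +
          3 * (∫ t in (0:ℝ)..1, (A t * γ t ^ 2 + B t * γ t)) := by
        rw [← intervalIntegral.integral_const_mul,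
          ← intervalIntegral.integral_add hintB (hintI.const_mul 3)]
        apply intervalIntegral.integral_congr
        intro t _
        ring
      rw [hE, hI, mul_zero, add_zero]
      exact integral_mul_ne_zero hB hcγ.neg hBsgn ht₀ hBt₀
        (fun t ht => neg_ne_zero.2 (hne t ht))
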